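/- Let f₀, f₁, …, f_s : ℝ^n → ℝ∪{∞} be proper lower semicontinuous functions, p ∈ Δ, p^ν ∈ Δ, θ^ν ≥ 0 with θ^ν → ∞ and θ^ν ‖p^ν − p‖₂² → 0. Define f(u,x) = f₀(x) + Σᵢ (pᵢ+uᵢ) fᵢ(x) + ι_{{0}}(u) and f^ν(u,x) = f₀(x) + Σᵢ (pᵢ^ν+uᵢ) fᵢ(x) + (θ^ν/2)‖u‖₂² + ι_Δ(p^ν+u). Then f^ν epi-converges to f on ℝ^s × ℝ^n. -/

import Mathlib

open Filter Topology
open scoped Classical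

/-- Weighted sum `Σᵢ cᵢ aᵢ` of extended reals `aᵢ ∈ (−∞,∞]` with weights `cᵢ ∈ ℝ`, under the
conventions `0·∞ = 0` and `∞ − ∞ = ∞` (any term with nonzero weight hitting `∞` makes the
whole sum `∞`). -/
noncomputable def wsum {s : ℕ} (c : Fin s → ℝ) (a : Fin s → EReal) : EReal :=
  if ∃ i, c i ≠ 0 ∧ a i = ⊤ then ⊤ else ((∑ i, c i * (a i).toReal : ℝ) : EReal)


lemma exists_real_lt_aux {a : EReal} (ha : a ≠ ⊥) : ∃ r : ℝ, (r : EReal) < a := by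
  induction a using EReal.rec with
  | bot => exact absurd rfl ha
  | coe t => exact ⟨t - 1, by exact_mod_cast sub_one_lt t⟩
  | top => exact ⟨0, EReal.coe_lt_top 0⟩

lemma wsum_ne_bot {s : ℕ} (c : Fin s → ℝ) (a : Fin s → EReal) : wsum c a ≠ ⊥ := by
  rw [wsum]; split
  · simp
  · exact EReal.coe_ne_bot _

lemma wsum_lb {s : ℕ} {c : Fin s → ℝ} (hc : ∀ i, 0 ≤ c i) {a : Fin s → EReal}
    {r : Fin s → ℝ} (hr : ∀ i, (r i : EReal) < a i) :
    ((∑ i, c i * r i : ℝ) : EReal) ≤ wsum c a := by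
  rw [wsum]; split
  · exact le_top
  · rename_i h
    push_neg at h
    rw [EReal.coe_le_coe_iff]
    apply Finset.sum_le_sum
    intro i _
    rcases eq_or_lt_of_le (hc i) with h0 | h0
    · simp [← h0]
    · have htop : a i ≠ ⊤ := h i (ne_of_gt h0)
      have hbot : a i ≠ ⊥ := ((EReal.bot_lt_coe _).trans (hr i)).ne'
      have : (r i : EReal) < ((a i).toReal : EReal) := by
        rw [EReal.coe_toReal htop hbot]; exact hr i
      exact mul_le_mul_of_nonneg_left (EReal.coe_lt_coe_iff.mp this).le (hc i)

/-- With proper lsc `f₀,f₁,…,f_s`, `p, p^ν ∈ Δ`, `θ^ν → ∞` and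
`θ^ν‖p^ν − p‖₂² → 0`, the Rockafellians
`f^ν(u,x) = f₀(x) + Σᵢ(pᵢ^ν+uᵢ)fᵢ(x) + (θ^ν/2)‖u‖₂² + ι_Δ(p^ν+u)` epi-converge to
`f(u,x) = f₀(x) + Σᵢ(pᵢ+uᵢ)fᵢ(x) + ι_{{0}}(u)`. -/
theorem stmt8 {s n : ℕ}
    (f₀ : EuclideanSpace ℝ (Fin n) → EReal)
    (F : Fin s → EuclideanSpace ℝ (Fin n) → EReal)
    -- properness and lower semicontinuity
    (hf₀proper : (∀ x, f₀ x ≠ ⊥) ∧ (∃ x, f₀ x ≠ ⊤)) (hf₀lsc : LowerSemicontinuous f₀)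
    (hFproper : ∀ i, (∀ x, F i x ≠ ⊥) ∧ (∃ x, F i x ≠ ⊤))
    (hFlsc : ∀ i, LowerSemicontinuous (F i))
    -- probability vectors and parameters
    (p : EuclideanSpace ℝ (Fin s)) (hp : (∀ i, 0 ≤ p i) ∧ ∑ i, p i = 1)
    (pν : ℕ → EuclideanSpace ℝ (Fin s)) (hpν : ∀ ν, (∀ i, 0 ≤ pν ν i) ∧ ∑ i, pν ν i = 1)
    (θν : ℕ → ℝ) (hθnn : ∀ ν, 0 ≤ θν ν)
    (hθ : Tendsto θν atTop atTop)
    (hθp : Tendsto (fun ν => θν ν * ‖pν ν - p‖ ^ 2) atTop (𝓝 0)) :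
    -- liminf condition of epi-convergence
    (∀ (u : EuclideanSpace ℝ (Fin s)) (x : EuclideanSpace ℝ (Fin n))
       (useq : ℕ → EuclideanSpace ℝ (Fin s)) (xseq : ℕ → EuclideanSpace ℝ (Fin n)),
       Tendsto useq atTop (𝓝 u) → Tendsto xseq atTop (𝓝 x) →
       (if u = 0 then f₀ x + wsum (fun i => p i) (fun i => F i x) else ⊤) ≤
         Filter.liminf (fun ν =>
           if (∀ i, 0 ≤ pν ν i + useq ν i) ∧ ∑ i, (pν ν i + useq ν i) = 1 then
             f₀ (xseq ν) + wsum (fun i => pν ν i + useq ν i) (fun i => F i (xseq ν))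
               + ((θν ν / 2 * ‖useq ν‖ ^ 2 : ℝ) : EReal)
           else ⊤) atTop) ∧
    -- limsup (recovery sequence) condition of epi-convergence
    (∀ (u : EuclideanSpace ℝ (Fin s)) (x : EuclideanSpace ℝ (Fin n)),
       ∃ (useq : ℕ → EuclideanSpace ℝ (Fin s)) (xseq : ℕ → EuclideanSpace ℝ (Fin n)),
         Tendsto useq atTop (𝓝 u) ∧ Tendsto xseq atTop (𝓝 x) ∧
         Filter.limsup (fun ν =>
           if (∀ i, 0 ≤ pν ν i + useq ν i) ∧ ∑ i, (pν ν i + useq ν i) = 1 then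
             f₀ (xseq ν) + wsum (fun i => pν ν i + useq ν i) (fun i => F i (xseq ν))
               + ((θν ν / 2 * ‖useq ν‖ ^ 2 : ℝ) : EReal)
           else ⊤) atTop ≤
         (if u = 0 then f₀ x + wsum (fun i => p i) (fun i => F i x) else ⊤)) := by
  -- p^ν → p
  have hpνnorm : Tendsto (fun ν => ‖pν ν - p‖) atTop (𝓝 0) := by
    have hsq : Tendsto (fun ν => ‖pν ν - p‖ ^ 2) atTop (𝓝 0) := by
      apply squeeze_zero' (Eventually.of_forall fun ν => by positivity)
        ((hθ.eventually_ge_atTop 1).mono fun ν hν => le_mul_of_one_le_left (by positivity) hν) hθp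
    have := (Real.continuous_sqrt.tendsto 0).comp hsq
    simp only [Function.comp_def, Real.sqrt_zero] at this
    convert this using 2 with ν
    rw [Real.sqrt_sq (norm_nonneg _)]
  have hpνp : Tendsto pν atTop (𝓝 p) := by
    rw [tendsto_iff_norm_sub_tendsto_zero]; exact hpνnorm
  constructor
  · -- liminf part
    intro u x useq xseq huseq hxseq
    rw [le_liminf_iff]
    intro b hb
    obtain ⟨c, hbc, hcT⟩ := EReal.lt_iff_exists_real_btwn.mp hb
    have main : ∃ (r₀ : ℝ) (r : Fin s → ℝ), ((r₀ : EReal) < f₀ x) ∧ (∀ i, ((r i : EReal)) < F i x) ∧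
        (∀ᶠ ν in atTop, (∀ i, 0 ≤ pν ν i + useq ν i) → (∑ i, (pν ν i + useq ν i)) = 1 →
          c < r₀ + (∑ i, (pν ν i + useq ν i) * r i) + θν ν / 2 * ‖useq ν‖ ^ 2) := by
      by_cases hu : u = 0
      · -- u = 0 case
        subst hu
        rw [if_pos rfl] at hcT
        have hA : f₀ x ≠ ⊥ := hf₀proper.1 x
        have hcoord : ∀ i, Tendsto (fun ν => pν ν i + useq ν i) atTop (𝓝 (p i)) := by
          intro i
          have h1 : Tendsto (fun ν => pν ν i) atTop (𝓝 (p i)) :=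
            ((PiLp.continuous_apply 2 _ i).tendsto p).comp hpνp
          have h2 : Tendsto (fun ν => useq ν i) atTop (𝓝 0) := by
            have := ((PiLp.continuous_apply 2 _ i).tendsto (0 : EuclideanSpace ℝ (Fin s))).comp huseq
            simpa [Function.comp_def] using this
          simpa using h1.add h2
        have hget : ∃ (r₀ : ℝ) (r : Fin s → ℝ), ((r₀ : EReal) < f₀ x) ∧
            (∀ i, ((r i : EReal)) < F i x) ∧ c < r₀ + ∑ i, p i * r i := by
          by_cases hAtop : f₀ x = ⊤
          · choose r hrr using fun i => exists_real_lt_aux ((hFproper i).1 x)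
            exact ⟨c - (∑ i, p i * r i) + 1, r,
              by rw [hAtop]; exact EReal.coe_lt_top _, hrr, by linarith⟩
          · by_cases hWtop : wsum (fun i => p i) (fun i => F i x) = ⊤
            · have hex : ∃ i, p i ≠ 0 ∧ F i x = ⊤ := by
                by_contra hno
                rw [wsum, if_neg hno] at hWtop
                exact EReal.coe_ne_top _ hWtop
              obtain ⟨i₀, hpi₀, hFi₀⟩ := hex
              have hpi₀' : 0 < p i₀ := lt_of_le_of_ne (hp.1 i₀) (Ne.symm hpi₀)
              choose r' hr' using fun i => exists_real_lt_aux ((hFproper i).1 x)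
              set Se := ∑ i ∈ Finset.univ.erase i₀, p i * r' i with hSe
              set r₀ := (f₀ x).toReal - 1 with hr₀def
              set R := max ((c - r₀ - Se + 1) / p i₀) (r' i₀) with hRdef
              refine ⟨r₀, Function.update r' i₀ R, ?_, ?_, ?_⟩
              · rw [← EReal.coe_toReal hAtop hA]
                exact_mod_cast sub_one_lt _
              · intro i
                rcases eq_or_ne i i₀ with rfl | hi
                · rw [Function.update_self, hFi₀]; exact EReal.coe_lt_top _
                · rw [Function.update_of_ne hi]; exact hr' i
              · have hsum : ∑ i, p i * Function.update r' i₀ R i = p i₀ * R + Se := by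
                  rw [← Finset.add_sum_erase _ (fun i => p i * Function.update r' i₀ R i)
                    (Finset.mem_univ i₀)]
                  congr 1
                  · rw [Function.update_self]
                  · apply Finset.sum_congr rfl
                    intro i hi
                    rw [Function.update_of_ne (Finset.ne_of_mem_erase hi)]
                have h5 : p i₀ * ((c - r₀ - Se + 1) / p i₀) = c - r₀ - Se + 1 := by
                  field_simp
                have h6 : p i₀ * ((c - r₀ - Se + 1) / p i₀) ≤ p i₀ * R :=
                  mul_le_mul_of_nonneg_left (le_max_left _ _) (hp.1 i₀)
                rw [hsum]
                linarith
            · have hno : ¬∃ i, (fun i => p i) i ≠ 0 ∧ F i x = ⊤ := fun hcon =>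
                hWtop (by rw [wsum, if_pos hcon])
              have hWeq : wsum (fun i => p i) (fun i => F i x)
                  = ((∑ i, p i * (F i x).toReal : ℝ) : EReal) := by
                rw [wsum, if_neg hno]
              rw [hWeq, ← EReal.coe_toReal hAtop hA, ← EReal.coe_add] at hcT
              set A := (f₀ x).toReal with hAdef
              set T := ∑ i, p i * (F i x).toReal with hTdef
              have creal : c < A + T := by exact_mod_cast hcT
              set δ := (A + T - c) / 2 with hδ
              have hδpos : 0 < δ := by rw [hδ]; linarith
              refine ⟨A - δ/2, fun i => if F i x = ⊤ then 0 else (F i x).toReal - δ/2, ?_, ?_, ?_⟩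
              · rw [← EReal.coe_toReal hAtop hA]
                exact EReal.coe_lt_coe_iff.mpr (by linarith)
              · intro i
                dsimp only
                split
                · rename_i h; rw [h]; exact EReal.coe_lt_top _
                · rename_i h
                  exact lt_of_lt_of_le (EReal.coe_lt_coe_iff.mpr (by linarith))
                    (EReal.coe_toReal_le ((hFproper i).1 x))
              · dsimp only
                have hterm : ∀ i ∈ Finset.univ, p i * (F i x).toReal - p i * (δ/2)
                    ≤ p i * (if F i x = ⊤ then 0 else (F i x).toReal - δ/2) := by
                  intro i _
                  split
                  · rename_i h
                    have hp0 : p i = 0 := by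
                      by_contra hne; exact hno ⟨i, hne, h⟩
                    simp [hp0]
                  · rw [mul_sub]
                have hge : T - δ/2 ≤ ∑ i, p i * (if F i x = ⊤ then 0 else (F i x).toReal - δ/2) := by
                  calc T - δ/2 = ∑ i, (p i * (F i x).toReal - p i * (δ/2)) := by
                        rw [Finset.sum_sub_distrib, ← Finset.sum_mul, hp.2, one_mul]
                    _ ≤ _ := Finset.sum_le_sum hterm
                linarith
        obtain ⟨r₀, r, hr₀, hr, hc⟩ := hget
        refine ⟨r₀, r, hr₀, hr, ?_⟩
        have hS : Tendsto (fun ν => ∑ i, (pν ν i + useq ν i) * r i) atTop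
            (𝓝 (∑ i, p i * r i)) :=
          tendsto_finset_sum _ fun i _ => (hcoord i).mul_const (r i)
        have E3 := hS.eventually (eventually_gt_nhds (by linarith : c - r₀ < ∑ i, p i * r i))
        filter_upwards [E3] with ν h3 hnn hsum
        have hpen : 0 ≤ θν ν / 2 * ‖useq ν‖ ^ 2 :=
          mul_nonneg (by linarith [hθnn ν]) (sq_nonneg _)
        linarith
      · -- u ≠ 0
        choose r hrr using fun i => exists_real_lt_aux ((hFproper i).1 x)
        obtain ⟨r₀, hr₀⟩ := exists_real_lt_aux (hf₀proper.1 x)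
        refine ⟨r₀, r, hr₀, hrr, ?_⟩
        have hpen : Tendsto (fun ν => θν ν / 2 * ‖useq ν‖ ^ 2) atTop atTop := by
          have h1 : Tendsto (fun ν => ‖useq ν‖ ^ 2) atTop (𝓝 (‖u‖ ^ 2)) := huseq.norm.pow 2
          have h2 : (0:ℝ) < ‖u‖ ^ 2 := pow_pos (norm_pos_iff.mpr hu) 2
          exact (hθ.atTop_div_const (by norm_num : (0:ℝ) < 2)).atTop_mul_pos h2 h1
        have E3 := hpen.eventually_gt_atTop (c - r₀ - ∑ i : Fin s, min (r i) 0)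
        filter_upwards [E3] with ν h3 hnn hsum
        have hSM : (∑ i : Fin s, min (r i) 0) ≤ ∑ i, (pν ν i + useq ν i) * r i := by
          apply Finset.sum_le_sum
          intro i _
          have h0 : 0 ≤ pν ν i + useq ν i := hnn i
          have h1 : pν ν i + useq ν i ≤ 1 := by
            have hle := Finset.single_le_sum (f := fun j => pν ν j + useq ν j)
              (fun j _ => hnn j) (Finset.mem_univ i)
            rw [hsum] at hle; exact hle
          rcases le_or_gt 0 (r i) with h | h
          · exact (min_le_right _ _).trans (mul_nonneg h0 h)
          · exact (min_le_left _ _).trans (by nlinarith)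
        linarith
    obtain ⟨r₀, r, hr₀, hr, key⟩ := main
    have E1 : ∀ᶠ ν in atTop, (r₀ : EReal) < f₀ (xseq ν) := hxseq.eventually (hf₀lsc x _ hr₀)
    have E2 : ∀ᶠ ν in atTop, ∀ i, (r i : EReal) < F i (xseq ν) := by
      rw [eventually_all]
      exact fun i => hxseq.eventually (hFlsc i x _ (hr i))
    refine ((E1.and (E2.and key)).mono fun ν ⟨h1, h2, h3⟩ => hbc.trans ?_)
    split
    · rename_i hcond
      calc (c : EReal)
          < ((r₀ + (∑ i, (pν ν i + useq ν i) * r i) + θν ν / 2 * ‖useq ν‖ ^ 2 : ℝ) : EReal) := by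
            exact_mod_cast h3 hcond.1 hcond.2
        _ = (r₀ : EReal) + ((∑ i, (pν ν i + useq ν i) * r i : ℝ) : EReal)
              + ((θν ν / 2 * ‖useq ν‖ ^ 2 : ℝ) : EReal) := by
            rw [← EReal.coe_add, ← EReal.coe_add]
        _ ≤ f₀ (xseq ν) + wsum (fun i => pν ν i + useq ν i) (fun i => F i (xseq ν))
              + ((θν ν / 2 * ‖useq ν‖ ^ 2 : ℝ) : EReal) :=
            add_le_add (add_le_add h1.le (wsum_lb (fun i => hcond.1 i) h2)) le_rfl
    · exact EReal.coe_lt_top c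
  · -- recovery part
    intro u x
    by_cases hu : u = 0
    · subst hu
      refine ⟨fun ν => p - pν ν, fun _ => x, ?_, tendsto_const_nhds, ?_⟩
      · rw [tendsto_zero_iff_norm_tendsto_zero]
        simpa [norm_sub_rev] using hpνnorm
      · rw [if_pos rfl]
        have hfun : (fun ν => if (∀ i, 0 ≤ pν ν i + (p - pν ν) i) ∧
              (∑ i, (pν ν i + (p - pν ν) i)) = 1 then
              f₀ x + wsum (fun i => pν ν i + (p - pν ν) i) (fun i => F i x)
                + ((θν ν / 2 * ‖p - pν ν‖ ^ 2 : ℝ) : EReal) else ⊤)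
            = fun ν => (f₀ x + wsum (fun i => p i) (fun i => F i x))
                + ((θν ν / 2 * ‖p - pν ν‖ ^ 2 : ℝ) : EReal) := by
          funext ν
          have hco : ∀ i, pν ν i + (p - pν ν) i = p i := fun i => by
            simp [PiLp.sub_apply]
          rw [if_pos ⟨fun i => by rw [hco i]; exact hp.1 i, by simp only [hco]; exact hp.2⟩]
          have hw : (fun i => pν ν i + (p - pν ν) i) = (fun i => p i) := funext hco
          rw [hw]
        rw [hfun]
        set T := f₀ x + wsum (fun i => p i) (fun i => F i x) with hT
        by_cases hTtop : T = ⊤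
        · exact hTtop ▸ le_top
        · have hTbot : T ≠ ⊥ := by
            rw [hT]
            intro hcon
            rcases EReal.add_eq_bot_iff.mp hcon with h | h
            exacts [hf₀proper.1 x h, wsum_ne_bot _ _ h]
          have htν : Tendsto (fun ν => θν ν / 2 * ‖p - pν ν‖ ^ 2) atTop (𝓝 0) := by
            have h2 := hθp.div_const 2
            rw [zero_div] at h2
            have hfe : (fun ν => θν ν / 2 * ‖p - pν ν‖ ^ 2)
                = fun ν => θν ν * ‖pν ν - p‖ ^ 2 / 2 := by
              funext ν; rw [norm_sub_rev]; ring
            rw [hfe]; exact h2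
          have heq : (fun ν => T + ((θν ν / 2 * ‖p - pν ν‖ ^ 2 : ℝ) : EReal))
              = fun ν => ((T.toReal + θν ν / 2 * ‖p - pν ν‖ ^ 2 : ℝ) : EReal) := by
            funext ν; rw [EReal.coe_add, EReal.coe_toReal hTtop hTbot]
          rw [heq]
          have hlim : Tendsto (fun ν => ((T.toReal + θν ν / 2 * ‖p - pν ν‖ ^ 2 : ℝ) : EReal))
              atTop (𝓝 T) := by
            rw [← EReal.coe_toReal hTtop hTbot]
            exact EReal.tendsto_coe.mpr (by simpa using tendsto_const_nhds.add htν)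
          exact hlim.limsup_eq.le
    · exact ⟨fun _ => u, fun _ => x, tendsto_const_nhds, tendsto_const_nhds, by
        rw [if_neg hu]; exact le_top⟩
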